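/- Define D[A,B,C] to be the number of permutations g of a set of size n = A + B + C avoiding a 2-max partial function f with parameters A, B, C. Then if B ≥ 2 and the parameters are realizable, D[A,B,C] = D[A+2,B-2,C] + D[A,B-2,C]. -/

import Mathlib

set_option linter.unusedSectionVars false

/-- Number of permutations avoiding a partial function `f` (an f-derangement):
permutations `g` with `g i ≠ f i` whenever `f i` is defined. -/
def avoidCount {n : ℕ} (f : Fin n → Option (Fin n)) : ℕ :=
  (Finset.univ.filter fun g : Equiv.Perm (Fin n) => ∀ i, f i ≠ some (g i)).card

/-- `f` is a 2-max partial function with parameters `A` (elements sharing their image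
with another element), `B` (elements with a unique image), `C` (elements where `f` is
undefined): every value has at most 2 preimages. -/
def TwoMaxParams {n : ℕ} (f : Fin n → Option (Fin n)) (A B C : ℕ) : Prop :=
  (∀ y : Fin n, (Finset.univ.filter fun i => f i = some y).card ≤ 2) ∧
  A = (Finset.univ.filter fun i : Fin n => f i ≠ none ∧ ∃ j, j ≠ i ∧ f j = f i).card ∧
  B = (Finset.univ.filter fun i : Fin n => f i ≠ none ∧ ∀ j, j ≠ i → f j ≠ f i).card ∧
  C = (Finset.univ.filter fun i : Fin n => f i = none).card

section Aux

variable {α : Type*} {β : Type*} [Fintype α] [DecidableEq α] [Fintype β] [DecidableEq β]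

def AvoidC (f : α → Option α) : ℕ :=
  (Finset.univ.filter fun g : Equiv.Perm α => ∀ i, f i ≠ some (g i)).card

def PMs (f : α → Option α) (A B C : ℕ) : Prop :=
  (∀ y : α, (Finset.univ.filter fun i => f i = some y).card ≤ 2) ∧
  A = (Finset.univ.filter fun i : α => f i ≠ none ∧ ∃ j, j ≠ i ∧ f j = f i).card ∧
  B = (Finset.univ.filter fun i : α => f i ≠ none ∧ ∀ j, j ≠ i → f j ≠ f i).card ∧
  C = (Finset.univ.filter fun i : α => f i = none).card

def fibc (f : α → Option α) (y : α) : ℕ := (Finset.univ.filter fun i => f i = some y).card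

lemma fibc_def (f : α → Option α) (y : α) :
    fibc f y = (Finset.univ.filter fun i => f i = some y).card := rfl

lemma my_pmap_some {β : Type*} {p : α → Prop} (g : ∀ a, p a → β) (o : Option α)
    (h : ∀ a ∈ o, p a) (w : α) (hw : o = some w) (hpw : p w) :
    Option.pmap g o h = some (g w hpw) := by subst hw; rfl

lemma my_pmap_none {β : Type*} {p : α → Prop} (g : ∀ a, p a → β) (o : Option α)
    (h : ∀ a ∈ o, p a) (hw : o = none) : Option.pmap g o h = none := by subst hw; rfl

lemma my_sumCompl_symm_pos {p : α → Prop} [DecidablePred p] (a : α) (h : p a) :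
    (Equiv.sumCompl p).symm a = Sum.inl ⟨a, h⟩ := by
  rw [Equiv.symm_apply_eq]; rfl

lemma my_sumCompl_symm_neg {p : α → Prop} [DecidablePred p] (a : α) (h : ¬ p a) :
    (Equiv.sumCompl p).symm a = Sum.inr ⟨a, h⟩ := by
  rw [Equiv.symm_apply_eq]; rfl

lemma card_ne_ne (a b : α) (h : a ≠ b) :
    Fintype.card {x : α // ¬x = a ∧ ¬x = b} = Fintype.card α - 2 := by
  classical
  rw [Fintype.card_subtype]
  have : Finset.univ.filter (fun x : α => ¬x = a ∧ ¬x = b) = Finset.univ \ {a, b} := by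
    ext x
    simp [not_or, and_comm]
  rw [this, Finset.card_sdiff_of_subset (Finset.subset_univ _), Finset.card_univ]
  rw [Finset.card_pair h]

lemma card_filter_subtype {pp : α → Prop} [DecidablePred pp] (R : α → Prop) [DecidablePred R] :
    (Finset.univ.filter (fun x : {a // pp a} => R x.1)).card
      = (Finset.univ.filter (fun a : α => pp a ∧ R a)).card := by
  classical
  rw [← Fintype.card_subtype, ← Fintype.card_subtype]
  exact Fintype.card_congr (Equiv.subtypeSubtypeEquivSubtypeInter pp R)

lemma exists_equiv_comp {K : Type*} [DecidableEq K] (c : α → K) (c' : β → K)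
    (h : ∀ k, Fintype.card {x // c x = k} = Fintype.card {x // c' x = k}) :
    ∃ e : α ≃ β, ∀ x, c' (e x) = c x := by
  refine ⟨(Equiv.sigmaFiberEquiv c).symm.trans
    ((Equiv.sigmaCongrRight fun k => Fintype.equivOfCardEq (h k)).trans
      (Equiv.sigmaFiberEquiv c')), fun x => ?_⟩
  exact ((Fintype.equivOfCardEq (h (c x))) ⟨x, rfl⟩).2

lemma fib_partition (f : α → Option α) (hle : ∀ y, fibc f y ≤ 2) :
    Fintype.card {y : α // fibc f y = 0} + Fintype.card {y : α // fibc f y = 1}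
      + Fintype.card {y : α // fibc f y = 2} = Fintype.card α := by
  classical
  rw [Fintype.card_subtype, Fintype.card_subtype, Fintype.card_subtype]
  have h1 := Finset.card_filter_add_card_filter_not (s := (Finset.univ : Finset α))
    (p := fun y => fibc f y = 0)
  have h2 := Finset.card_filter_add_card_filter_not
    (s := Finset.univ.filter fun y : α => ¬ fibc f y = 0)
    (p := fun y => fibc f y = 1)
  rw [Finset.filter_filter, Finset.filter_filter] at h2
  have e1 : Finset.univ.filter (fun y : α => ¬fibc f y = 0 ∧ fibc f y = 1)
      = Finset.univ.filter (fun y : α => fibc f y = 1) := by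
    apply Finset.filter_congr; intro y _; constructor
    · rintro ⟨-, h⟩; exact h
    · intro h; exact ⟨by omega, h⟩
  have e2 : Finset.univ.filter (fun y : α => ¬fibc f y = 0 ∧ ¬fibc f y = 1)
      = Finset.univ.filter (fun y : α => fibc f y = 2) := by
    apply Finset.filter_congr; intro y _
    have := hle y
    constructor
    · rintro ⟨h0, h1⟩; omega
    · intro h; omega
  rw [e1, e2] at h2
  rw [Finset.card_univ] at h1
  omega

lemma avoid_eq_of_pms' (f : α → Option α) (f' : β → Option β)
    (hcard : Fintype.card α = Fintype.card β)
    (hC : Fintype.card {x : α // f x = none} = Fintype.card {x : β // f' x = none})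
    (hle : ∀ y, fibc f y ≤ 2) (hle' : ∀ y, fibc f' y ≤ 2)
    (h1 : Fintype.card {y : α // fibc f y = 1} = Fintype.card {y : β // fibc f' y = 1})
    (h2 : Fintype.card {y : α // fibc f y = 2} = Fintype.card {y : β // fibc f' y = 2}) :
    AvoidC f = AvoidC f' := by
  classical
  obtain ⟨ψ, hψ⟩ : ∃ ψ : α ≃ β, ∀ y, fibc f' (ψ y) = fibc f y := by
    apply exists_equiv_comp (c := fibc f) (c' := fibc f')
    intro k
    match k with
    | 0 =>
      have p1 := fib_partition f hle
      have p2 := fib_partition f' hle'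
      omega
    | 1 => exact h1
    | 2 => exact h2
    | (k+3) =>
      have z1 : Fintype.card {y : α // fibc f y = k + 3} = 0 :=
        Fintype.card_eq_zero_iff.mpr ⟨fun ⟨y, hy⟩ => by have := hle y; omega⟩
      have z2 : Fintype.card {y : β // fibc f' y = k + 3} = 0 :=
        Fintype.card_eq_zero_iff.mpr ⟨fun ⟨y, hy⟩ => by have := hle' y; omega⟩
      rw [z1, z2]
  obtain ⟨φ, hφ⟩ : ∃ φ : α ≃ β, ∀ x, Option.map ψ.symm (f' (φ x)) = f x := by
    apply exists_equiv_comp (c := f) (c' := fun x' => Option.map ψ.symm (f' x'))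
    intro k
    match k with
    | none =>
      have e : ∀ x' : β, Option.map ψ.symm (f' x') = none ↔ f' x' = none := by
        intro x'; simp
      rw [Fintype.card_congr (Equiv.subtypeEquivRight e)]
      exact hC
    | some a =>
      have e : ∀ x' : β, Option.map ψ.symm (f' x') = some a ↔ f' x' = some (ψ a) := by
        intro x'
        cases hx : f' x' with
        | none => simp
        | some w => simp [Equiv.symm_apply_eq]
      rw [Fintype.card_congr (Equiv.subtypeEquivRight e)]
      have := hψ a
      rw [fibc, fibc] at this
      rw [Fintype.card_subtype, Fintype.card_subtype, this]
  have hφ' : ∀ x, f' (φ x) = Option.map ψ (f x) := by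
    intro x
    rw [← hφ x, Option.map_map]
    simp [Function.comp_def]
  unfold AvoidC
  refine Finset.card_bij' (fun g _ => (φ.symm.trans g).trans ψ)
    (fun g' _ => (φ.trans g').trans ψ.symm) ?_ ?_ ?_ ?_
  · intro g hg
    simp only [Finset.mem_filter, Finset.mem_univ, true_and] at hg ⊢
    intro j heq
    simp only [Equiv.trans_apply] at heq
    have h1 : f' (φ (φ.symm j)) = Option.map ψ (f (φ.symm j)) := hφ' _
    rw [φ.apply_symm_apply] at h1
    rw [h1] at heq
    cases hfi : f (φ.symm j) with
    | none => rw [hfi] at heq; simp at heq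
    | some w =>
      rw [hfi] at heq
      simp only [Option.map_some, Option.some_inj] at heq
      exact hg (φ.symm j) (by rw [hfi, ψ.injective heq])
  · intro g' hg'
    simp only [Finset.mem_filter, Finset.mem_univ, true_and] at hg' ⊢
    intro i heq
    simp only [Equiv.trans_apply] at heq
    apply hg' (φ i)
    rw [hφ' i, heq]
    simp
  · intro g _; ext x; simp
  · intro g' _; ext x; simp

lemma pms_card (f : α → Option α) {A B C : ℕ} (hf : PMs f A B C) :
    Fintype.card α = A + B + C := by
  classical
  obtain ⟨-, hA, hB, hC⟩ := hf
  have h1 := Finset.card_filter_add_card_filter_not (s := (Finset.univ : Finset α))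
    (p := fun i => f i = none)
  have h2 := Finset.card_filter_add_card_filter_not
    (s := Finset.univ.filter fun i : α => ¬ f i = none)
    (p := fun i => ∃ j, j ≠ i ∧ f j = f i)
  rw [Finset.filter_filter, Finset.filter_filter] at h2
  have e2 : Finset.univ.filter (fun i : α => ¬f i = none ∧ ¬∃ j, j ≠ i ∧ f j = f i)
      = Finset.univ.filter (fun i : α => f i ≠ none ∧ ∀ j, j ≠ i → f j ≠ f i) := by
    apply Finset.filter_congr
    intro i _
    constructor
    · rintro ⟨h0, hne⟩
      exact ⟨h0, fun j hj hfj => hne ⟨j, hj, hfj⟩⟩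
    · rintro ⟨h0, hu⟩
      exact ⟨h0, fun ⟨j, hj, hfj⟩ => hu j hj hfj⟩
  rw [e2] at h2
  rw [Finset.card_univ] at h1
  simp only [ne_eq] at hA hB hC h1 h2
  omega

lemma pms_fib_one (f : α → Option α) {A B C : ℕ} (hf : PMs f A B C) :
    Fintype.card {y : α // fibc f y = 1} = B := by
  classical
  obtain ⟨h2max, -, hB, -⟩ := hf
  rw [Fintype.card_subtype, hB]
  set m : α → α := fun i => (f i).getD i with hm
  have hmem : ∀ i ∈ Finset.univ.filter (fun i : α => f i ≠ none ∧ ∀ j, j ≠ i → f j ≠ f i),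
      m i ∈ Finset.univ.filter (fun y : α => fibc f y = 1) := by
    intro i hi
    simp only [Finset.mem_filter, Finset.mem_univ, true_and] at hi ⊢
    obtain ⟨h0, hu⟩ := hi
    obtain ⟨y, hy⟩ := Option.ne_none_iff_exists'.mp h0
    have hmy : m i = y := by simp [hm, hy]
    rw [hmy, fibc_def, Finset.card_eq_one]
    refine ⟨i, ?_⟩
    ext j
    simp only [Finset.mem_filter, Finset.mem_univ, true_and, Finset.mem_singleton]
    constructor
    · intro hj; by_contra hne; exact hu j hne (hy ▸ hj)
    · rintro rfl; exact hy
  rw [Finset.card_eq_sum_card_fiberwise hmem]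
  have hsumm : ∀ y ∈ Finset.univ.filter (fun y : α => fibc f y = 1),
      ((Finset.univ.filter (fun i : α => f i ≠ none ∧ ∀ j, j ≠ i → f j ≠ f i)).filter
        (fun i => m i = y)).card = 1 := by
    intro y hy
    simp only [Finset.mem_filter, Finset.mem_univ, true_and] at hy
    rw [fibc_def] at hy
    have hset : (Finset.univ.filter (fun i : α => f i ≠ none ∧ ∀ j, j ≠ i → f j ≠ f i)).filter
        (fun i => m i = y) = Finset.univ.filter (fun i : α => f i = some y) := by
      ext j
      simp only [Finset.mem_filter, Finset.mem_univ, true_and]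
      constructor
      · rintro ⟨⟨h0, -⟩, hmj⟩
        obtain ⟨y', hy'⟩ := Option.ne_none_iff_exists'.mp h0
        have : y' = y := by simpa [hm, hy'] using hmj
        rw [← this]; exact hy'
      · intro hj
        have hja : ∀ k, f k = some y → k = j := by
          intro k hk
          obtain ⟨a, ha⟩ := Finset.card_eq_one.mp hy
          have h1 : k ∈ Finset.univ.filter (fun i : α => f i = some y) := by simp [hk]
          have h2 : j ∈ Finset.univ.filter (fun i : α => f i = some y) := by simp [hj]
          rw [ha, Finset.mem_singleton] at h1 h2
          rw [h1, h2]
        refine ⟨⟨by simp [hj], fun k hk hfk => hk (hja k ?_)⟩, by simp [hm, hj]⟩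
        rw [hj] at hfk; exact hfk
    rw [hset]; exact hy
  rw [Finset.sum_congr rfl hsumm, Finset.sum_const, smul_eq_mul, mul_one]

lemma pms_fib_two (f : α → Option α) {A B C : ℕ} (hf : PMs f A B C) :
    2 * Fintype.card {y : α // fibc f y = 2} = A := by
  classical
  obtain ⟨h2max, hA, -, -⟩ := hf
  rw [Fintype.card_subtype, hA]
  set m : α → α := fun i => (f i).getD i with hm
  have hfib : ∀ i y, f i = some y → ((f i ≠ none ∧ ∃ j, j ≠ i ∧ f j = f i) ↔ fibc f y = 2) := by
    intro i y hy
    constructor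
    · rintro ⟨-, j, hj, hfj⟩
      have hle := h2max y
      have hlt : 1 < fibc f y := by
        rw [fibc_def, Finset.one_lt_card]
        exact ⟨i, by simp [hy], j, by simp [hfj, hy], fun h => hj h.symm⟩
      rw [fibc_def] at *
      omega
    · intro h2
      refine ⟨by simp [hy], ?_⟩
      have : 1 < (Finset.univ.filter fun k => f k = some y).card := by
        rw [← fibc_def, h2]; omega
      obtain ⟨a, ha, b, hb, hab⟩ := Finset.one_lt_card.mp this
      simp only [Finset.mem_filter, Finset.mem_univ, true_and] at ha hb
      rcases eq_or_ne a i with rfl | hai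
      · exact ⟨b, fun h => hab h.symm, by rw [hb, hy]⟩
      · exact ⟨a, hai, by rw [ha, hy]⟩
  have hmem : ∀ i ∈ Finset.univ.filter (fun i : α => f i ≠ none ∧ ∃ j, j ≠ i ∧ f j = f i),
      m i ∈ Finset.univ.filter (fun y : α => fibc f y = 2) := by
    intro i hi
    simp only [Finset.mem_filter, Finset.mem_univ, true_and] at hi ⊢
    obtain ⟨y, hy⟩ := Option.ne_none_iff_exists'.mp hi.1
    have hmy : m i = y := by simp [hm, hy]
    rw [hmy]
    exact (hfib i y hy).mp hi
  rw [Finset.card_eq_sum_card_fiberwise hmem]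
  have hsumm : ∀ y ∈ Finset.univ.filter (fun y : α => fibc f y = 2),
      ((Finset.univ.filter (fun i : α => f i ≠ none ∧ ∃ j, j ≠ i ∧ f j = f i)).filter
        (fun i => m i = y)).card = 2 := by
    intro y hy
    simp only [Finset.mem_filter, Finset.mem_univ, true_and] at hy
    have hset : (Finset.univ.filter (fun i : α => f i ≠ none ∧ ∃ j, j ≠ i ∧ f j = f i)).filter
        (fun i => m i = y) = Finset.univ.filter (fun i : α => f i = some y) := by
      ext j
      simp only [Finset.mem_filter, Finset.mem_univ, true_and]
      constructor
      · rintro ⟨⟨h0, -⟩, hmj⟩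
        obtain ⟨y', hy'⟩ := Option.ne_none_iff_exists'.mp h0
        have : y' = y := by simpa [hm, hy'] using hmj
        rw [← this]; exact hy'
      · intro hj
        exact ⟨(hfib j y hj).mpr hy, by simp [hm, hj]⟩
    rw [hset, ← fibc_def]; exact hy
  rw [Finset.sum_congr rfl hsumm, Finset.sum_const, smul_eq_mul, mul_comm]

lemma pms_fib_none (f : α → Option α) {A B C : ℕ} (hf : PMs f A B C) :
    Fintype.card {x : α // f x = none} = C := by
  rw [Fintype.card_subtype]
  exact hf.2.2.2.symm

lemma avoid_eq_of_pms (f : α → Option α) (f' : β → Option β) {A B C : ℕ}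
    (hf : PMs f A B C) (hf' : PMs f' A B C) : AvoidC f = AvoidC f' := by
  apply avoid_eq_of_pms'
  · rw [pms_card f hf, pms_card f' hf']
  · rw [pms_fib_none f hf, pms_fib_none f' hf']
  · intro y; exact hf.1 y
  · intro y; exact hf'.1 y
  · rw [pms_fib_one f hf, pms_fib_one f' hf']
  · have a1 := pms_fib_two f hf
    have a2 := pms_fib_two f' hf'
    omega

end Aux

set_option maxHeartbeats 1000000 in
lemma core_rec {α : Type u} [Fintype α] [DecidableEq α] (f : α → Option α) {A B C : ℕ}
    (hB : 2 ≤ B) (hf : PMs f A B C) :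
    ∃ (f₁' : α → Option α) (T : Type u) (_ : Fintype T) (_ : DecidableEq T)
      (f₂' : T → Option T),
      PMs f₁' (A+2) (B-2) C ∧ PMs f₂' A (B-2) C ∧
      AvoidC f = AvoidC f₁' + AvoidC f₂' := by
  classical
  obtain ⟨h2max, hA, hBe, hC⟩ := hf
  have hcard2 : 1 < (Finset.univ.filter fun i : α => f i ≠ none ∧ ∀ j, j ≠ i → f j ≠ f i).card := by
    omega
  obtain ⟨i₁, hi₁m, i₂, hi₂m, hne⟩ := Finset.one_lt_card.mp hcard2
  simp only [Finset.mem_filter, Finset.mem_univ, true_and] at hi₁m hi₂m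
  obtain ⟨h01, hu1⟩ := hi₁m
  obtain ⟨h02, hu2⟩ := hi₂m
  obtain ⟨v₁, hv₁⟩ := Option.ne_none_iff_exists'.mp h01
  obtain ⟨v₂, hv₂⟩ := Option.ne_none_iff_exists'.mp h02
  have hvne : v₁ ≠ v₂ := by
    intro h
    exact hu1 i₂ (Ne.symm hne) (by rw [hv₂, hv₁, h])
  have hfib1 : ∀ j, f j = some v₁ → j = i₁ := by
    intro j hj
    by_contra h
    exact hu1 j h (by rw [hj, hv₁])
  have hfib2 : ∀ j, f j = some v₂ → j = i₂ := by
    intro j hj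
    by_contra h
    exact hu2 j h (by rw [hj, hv₂])
  set f₁' : α → Option α := fun i => if i = i₂ then some v₁ else f i with hf₁'
  have ha1 : f₁' i₁ = some v₁ := by simp [hf₁', hne, hv₁]
  have ha2 : f₁' i₂ = some v₁ := by simp [hf₁']
  have hrest : ∀ i, i ≠ i₂ → f₁' i = f i := fun i hi => by simp [hf₁', hi]
  -- parameters of f₁'
  have hPMs1 : PMs f₁' (A+2) (B-2) C := by
    have hPp : ∀ i, (f₁' i ≠ none ∧ ∃ j, j ≠ i ∧ f₁' j = f₁' i) ↔
        (i = i₁ ∨ i = i₂ ∨ (f i ≠ none ∧ ∃ j, j ≠ i ∧ f j = f i)) := by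
      intro i
      constructor
      · rintro ⟨hn0, j, hj, hfj⟩
        by_cases h1 : i = i₁
        · exact Or.inl h1
        by_cases h2 : i = i₂
        · exact Or.inr (Or.inl h2)
        right; right
        rw [hrest i h2] at hn0
        refine ⟨hn0, ?_⟩
        by_cases hji : j = i₂
        · subst hji
          rw [ha2, hrest i h2] at hfj
          exact absurd (hfib1 i hfj.symm) h1
        · rw [hrest j hji, hrest i h2] at hfj
          exact ⟨j, hj, hfj⟩
      · rintro (rfl | rfl | ⟨hn0, j, hj, hfj⟩)
        · exact ⟨by rw [ha1]; simp, i₂, fun h => hne h.symm, by rw [ha2, ha1]⟩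
        · exact ⟨by rw [ha2]; simp, i₁, hne, by rw [ha1, ha2]⟩
        · have hii1 : i ≠ i₁ := fun h => hu1 j (by rw [h] at hj; exact hj) (by rw [← h]; exact hfj)
          have hii2 : i ≠ i₂ := fun h => hu2 j (by rw [h] at hj; exact hj) (by rw [← h]; exact hfj)
          have hji2 : j ≠ i₂ := by
            intro h
            subst h
            exact hu2 i (fun h' => hii2 h') hfj.symm
          rw [hrest i hii2]
          exact ⟨hn0, j, hj, by rw [hrest j hji2]; exact hfj⟩
    have hPu : ∀ i, (f₁' i ≠ none ∧ ∀ j, j ≠ i → f₁' j ≠ f₁' i) ↔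
        (¬i = i₁ ∧ ¬i = i₂ ∧ (f i ≠ none ∧ ∀ j, j ≠ i → f j ≠ f i)) := by
      intro i
      constructor
      · rintro ⟨hn0, hu⟩
        have h1 : ¬ i = i₁ := by
          rintro rfl
          exact hu i₂ (fun h => hne h.symm) (by rw [ha2, ha1])
        have h2 : ¬ i = i₂ := by
          rintro rfl
          exact hu i₁ hne (by rw [ha1, ha2])
        refine ⟨h1, h2, by rwa [hrest i h2] at hn0, fun j hj hfj => ?_⟩
        by_cases hji : j = i₂
        · subst hji
          exact h2 (hfib2 i (hfj.symm.trans hv₂))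
        · exact hu j hj (by rw [hrest j hji, hrest i h2]; exact hfj)
      · rintro ⟨h1, h2, hn0, hu⟩
        refine ⟨by rwa [hrest i h2], fun j hj hfj => ?_⟩
        by_cases hji : j = i₂
        · subst hji
          rw [ha2, hrest i h2] at hfj
          exact h1 (hfib1 i hfj.symm)
        · rw [hrest j hji, hrest i h2] at hfj
          exact hu j hj hfj
    refine ⟨?_, ?_, ?_, ?_⟩
    · intro y
      by_cases hyv : y = v₁
      · rw [hyv]
        have hset : Finset.univ.filter (fun i => f₁' i = some v₁) = {i₁, i₂} := by
          ext i
          simp only [Finset.mem_filter, Finset.mem_univ, true_and, Finset.mem_insert,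
            Finset.mem_singleton]
          constructor
          · intro hi
            by_cases h2 : i = i₂
            · exact Or.inr h2
            · rw [hrest i h2] at hi; exact Or.inl (hfib1 i hi)
          · rintro (rfl | rfl)
            · exact ha1
            · exact ha2
        rw [hset, Finset.card_pair hne]
      · have hsub2 : Finset.univ.filter (fun i => f₁' i = some y)
            ⊆ Finset.univ.filter (fun i => f i = some y) := by
          intro i hi
          simp only [Finset.mem_filter, Finset.mem_univ, true_and] at hi ⊢
          by_cases h2 : i = i₂
          · subst h2
            exact absurd (Option.some_inj.mp (ha2.symm.trans hi)).symm hyv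
          · rw [hrest i h2] at hi; exact hi
        exact le_trans (Finset.card_le_card hsub2) (h2max y)
    · have hsetPp : Finset.univ.filter (fun i : α => f₁' i ≠ none ∧ ∃ j, j ≠ i ∧ f₁' j = f₁' i)
          = insert i₁ (insert i₂ (Finset.univ.filter
              (fun i : α => f i ≠ none ∧ ∃ j, j ≠ i ∧ f j = f i))) := by
        ext i
        simp only [Finset.mem_filter, Finset.mem_univ, true_and, Finset.mem_insert]
        exact hPp i
      have hi2notin : i₂ ∉ Finset.univ.filter
          (fun i : α => f i ≠ none ∧ ∃ j, j ≠ i ∧ f j = f i) := by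
        intro h
        simp only [Finset.mem_filter, Finset.mem_univ, true_and] at h
        obtain ⟨-, j, hj, hfj⟩ := h
        exact hu2 j hj hfj
      have hi1notin : i₁ ∉ insert i₂ (Finset.univ.filter
          (fun i : α => f i ≠ none ∧ ∃ j, j ≠ i ∧ f j = f i)) := by
        intro h
        rcases Finset.mem_insert.mp h with h' | h'
        · exact hne h'
        · simp only [Finset.mem_filter, Finset.mem_univ, true_and] at h'
          obtain ⟨-, j, hj, hfj⟩ := h'
          exact hu1 j hj hfj
      rw [hsetPp, Finset.card_insert_of_notMem hi1notin,
        Finset.card_insert_of_notMem hi2notin, ← hA]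
    · have hsetPu : Finset.univ.filter (fun i : α => f₁' i ≠ none ∧ ∀ j, j ≠ i → f₁' j ≠ f₁' i)
          = (Finset.univ.filter (fun i : α => f i ≠ none ∧ ∀ j, j ≠ i → f j ≠ f i))
              \ {i₁, i₂} := by
        ext i
        simp only [Finset.mem_sdiff, Finset.mem_filter, Finset.mem_univ, true_and,
          Finset.mem_insert, Finset.mem_singleton, not_or]
        rw [hPu i]
        tauto
      have hsub : {i₁, i₂} ⊆ Finset.univ.filter
          (fun i : α => f i ≠ none ∧ ∀ j, j ≠ i → f j ≠ f i) := by
        intro x hx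
        rcases Finset.mem_insert.mp hx with rfl | hx'
        · simp only [Finset.mem_filter, Finset.mem_univ, true_and]
          exact ⟨h01, hu1⟩
        · rw [Finset.mem_singleton] at hx'
          subst hx'
          simp only [Finset.mem_filter, Finset.mem_univ, true_and]
          exact ⟨h02, hu2⟩
      rw [hsetPu, Finset.card_sdiff_of_subset hsub, Finset.card_pair hne, ← hBe]
    · have hset : Finset.univ.filter (fun i : α => f₁' i = none)
          = Finset.univ.filter (fun i : α => f i = none) := by
        ext i
        simp only [Finset.mem_filter, Finset.mem_univ, true_and]
        by_cases h2 : i = i₂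
        · subst h2
          rw [ha2, hv₂]
          simp
        · rw [hrest i h2]
      rw [hset, ← hC]
  -- the two-element subtype
  have hcT : Fintype.card {y : α // ¬y = v₂ ∧ ¬y = v₁} = Fintype.card {x : α // ¬x = i₁ ∧ ¬x = i₂} := by
    rw [card_ne_ne _ _ (fun h => hvne h.symm), card_ne_ne _ _ hne]
  set u : {y : α // ¬y = v₂ ∧ ¬y = v₁} ≃ {x : α // ¬x = i₁ ∧ ¬x = i₂} :=
    Fintype.equivOfCardEq hcT with hu
  have hq : ∀ x : α, (¬x = i₁ ∧ ¬x = i₂) → ∀ w, f x = some w → (¬w = v₂ ∧ ¬w = v₁) := by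
    intro x hx w hw
    constructor
    · intro h; exact hx.2 (hfib2 x (by rw [hw, h]))
    · intro h; exact hx.1 (hfib1 x (by rw [hw, h]))
  set f₂' : {x : α // ¬x = i₁ ∧ ¬x = i₂} → Option {x : α // ¬x = i₁ ∧ ¬x = i₂} :=
    fun x => Option.pmap (fun w hw => u ⟨w, hw⟩) (f x.1)
      (fun w hw => hq x.1 x.2 w hw) with hf₂'
  have hf2some : ∀ (x : {x : α // ¬x = i₁ ∧ ¬x = i₂}) (w : α) (hw : f x.1 = some w)
      (hpw : ¬w = v₂ ∧ ¬w = v₁), f₂' x = some (u ⟨w, hpw⟩) := by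
    intro x w hw hpw
    rw [hf₂']
    exact my_pmap_some _ _ _ w hw hpw
  have hf2none : ∀ (x : {x : α // ¬x = i₁ ∧ ¬x = i₂}), f x.1 = none → f₂' x = none := by
    intro x hx; rw [hf₂']; exact my_pmap_none _ _ _ hx
  have hf2none' : ∀ (x : {x : α // ¬x = i₁ ∧ ¬x = i₂}), f₂' x = none → f x.1 = none := by
    intro x hx
    cases hfx : f x.1 with
    | none => rfl
    | some w => rw [hf2some x w hfx (hq x.1 x.2 w hfx)] at hx; simp at hx
  have hf2eq : ∀ x x' : {x : α // ¬x = i₁ ∧ ¬x = i₂}, f₂' x = f₂' x' ↔ f x.1 = f x'.1 := by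
    intro x x'
    cases hfx : f x.1 with
    | none =>
      rw [hf2none x hfx]
      cases hfx' : f x'.1 with
      | none => rw [hf2none x' hfx']; simp
      | some w => rw [hf2some x' w hfx' (hq x'.1 x'.2 w hfx')]; simp
    | some w =>
      rw [hf2some x w hfx (hq x.1 x.2 w hfx)]
      cases hfx' : f x'.1 with
      | none => rw [hf2none x' hfx']; simp
      | some w' =>
        rw [hf2some x' w' hfx' (hq x'.1 x'.2 w' hfx')]
        simp [Equiv.apply_eq_iff_eq, Subtype.ext_iff]
  have hPMs2 : PMs f₂' A (B-2) C := by
    refine ⟨?_, ?_, ?_, ?_⟩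
    · intro t
      have hiff : ∀ x : {x : α // ¬x = i₁ ∧ ¬x = i₂},
          f₂' x = some t ↔ f x.1 = some (u.symm t).1 := by
        intro x
        by_cases hfx0 : f x.1 = none
        · rw [hf2none x hfx0, hfx0]; simp
        · obtain ⟨w, hfx⟩ := Option.ne_none_iff_exists'.mp hfx0
          have huv : u ⟨w, hq x.1 x.2 w hfx⟩ = t ↔ w = (u.symm t).1 := by
            rw [Equiv.apply_eq_iff_eq_symm_apply, Subtype.ext_iff]
          rw [hf2some x w hfx (hq x.1 x.2 w hfx), hfx]
          simp only [Option.some_inj]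
          exact huv
      rw [Finset.filter_congr (fun x _ => hiff x),
        card_filter_subtype (R := fun a : α => f a = some (u.symm t).1)]
      refine le_trans (Finset.card_le_card ?_) (h2max (u.symm t).1)
      intro i hi
      simp only [Finset.mem_filter, Finset.mem_univ, true_and] at hi ⊢
      exact hi.2
    · have hPp2 : ∀ x : {x : α // ¬x = i₁ ∧ ¬x = i₂},
          (f₂' x ≠ none ∧ ∃ j, j ≠ x ∧ f₂' j = f₂' x) ↔
            (f x.1 ≠ none ∧ ∃ j, j ≠ x.1 ∧ f j = f x.1) := by
        intro x
        constructor
        · rintro ⟨hn, j, hj, hfe⟩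
          exact ⟨fun h => hn (hf2none x h), j.1, fun h => hj (Subtype.ext h),
            (hf2eq j x).mp hfe⟩
        · rintro ⟨hn, j, hj, hfj⟩
          have hj1 : ¬j = i₁ := fun h => x.2.1 (hfib1 x.1 (by rw [← hfj, h, hv₁]))
          have hj2 : ¬j = i₂ := fun h => x.2.2 (hfib2 x.1 (by rw [← hfj, h, hv₂]))
          exact ⟨fun h => hn (hf2none' x h), ⟨j, hj1, hj2⟩,
            fun h => hj (congrArg Subtype.val h), (hf2eq ⟨j, hj1, hj2⟩ x).mpr hfj⟩
      rw [Finset.filter_congr (fun x _ => hPp2 x),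
        card_filter_subtype (R := fun a : α => f a ≠ none ∧ ∃ j, j ≠ a ∧ f j = f a)]
      have hset : Finset.univ.filter
          (fun a : α => (¬a = i₁ ∧ ¬a = i₂) ∧ (f a ≠ none ∧ ∃ j, j ≠ a ∧ f j = f a))
          = Finset.univ.filter (fun a : α => f a ≠ none ∧ ∃ j, j ≠ a ∧ f j = f a) := by
        ext a
        simp only [Finset.mem_filter, Finset.mem_univ, true_and]
        constructor
        · rintro ⟨-, h⟩; exact h
        · rintro ⟨hn, j, hj, hfj⟩
          refine ⟨⟨fun h => ?_, fun h => ?_⟩, hn, j, hj, hfj⟩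
          · subst h; exact hu1 j hj hfj
          · subst h; exact hu2 j hj hfj
      rw [hset, ← hA]
    · have hPu2 : ∀ x : {x : α // ¬x = i₁ ∧ ¬x = i₂},
          (f₂' x ≠ none ∧ ∀ j, j ≠ x → f₂' j ≠ f₂' x) ↔
            (f x.1 ≠ none ∧ ∀ j, j ≠ x.1 → f j ≠ f x.1) := by
        intro x
        constructor
        · rintro ⟨hn, hu⟩
          refine ⟨fun h => hn (hf2none x h), fun j hj hfj => ?_⟩
          by_cases hj1 : j = i₁
          · exact x.2.1 (hfib1 x.1 (by rw [← hfj, hj1, hv₁]))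
          by_cases hj2 : j = i₂
          · exact x.2.2 (hfib2 x.1 (by rw [← hfj, hj2, hv₂]))
          exact hu ⟨j, hj1, hj2⟩ (fun h => hj (congrArg Subtype.val h))
            ((hf2eq ⟨j, hj1, hj2⟩ x).mpr hfj)
        · rintro ⟨hn, hu⟩
          exact ⟨fun h => hn (hf2none' x h),
            fun j hj hfe => hu j.1 (fun h => hj (Subtype.ext h)) ((hf2eq j x).mp hfe)⟩
      rw [Finset.filter_congr (fun x _ => hPu2 x),
        card_filter_subtype (R := fun a : α => f a ≠ none ∧ ∀ j, j ≠ a → f j ≠ f a)]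
      have hset : Finset.univ.filter
          (fun a : α => (¬a = i₁ ∧ ¬a = i₂) ∧ (f a ≠ none ∧ ∀ j, j ≠ a → f j ≠ f a))
          = (Finset.univ.filter (fun a : α => f a ≠ none ∧ ∀ j, j ≠ a → f j ≠ f a))
              \ {i₁, i₂} := by
        ext a
        simp only [Finset.mem_sdiff, Finset.mem_filter, Finset.mem_univ, true_and,
          Finset.mem_insert, Finset.mem_singleton, not_or]
        tauto
      have hsub : {i₁, i₂} ⊆ Finset.univ.filter
          (fun a : α => f a ≠ none ∧ ∀ j, j ≠ a → f j ≠ f a) := by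
        intro x hx
        rcases Finset.mem_insert.mp hx with rfl | hx'
        · simp only [Finset.mem_filter, Finset.mem_univ, true_and]
          exact ⟨h01, hu1⟩
        · rw [Finset.mem_singleton] at hx'
          subst hx'
          simp only [Finset.mem_filter, Finset.mem_univ, true_and]
          exact ⟨h02, hu2⟩
      rw [hset, Finset.card_sdiff_of_subset hsub, Finset.card_pair hne, ← hBe]
    · have hnn : ∀ x : {x : α // ¬x = i₁ ∧ ¬x = i₂}, f₂' x = none ↔ f x.1 = none :=
        fun x => ⟨hf2none' x, hf2none x⟩
      rw [Finset.filter_congr (fun x _ => hnn x),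
        card_filter_subtype (R := fun a : α => f a = none)]
      have hset : Finset.univ.filter (fun a : α => (¬a = i₁ ∧ ¬a = i₂) ∧ f a = none)
          = Finset.univ.filter (fun a : α => f a = none) := by
        ext a
        simp only [Finset.mem_filter, Finset.mem_univ, true_and]
        constructor
        · rintro ⟨-, h⟩; exact h
        · intro h
          refine ⟨⟨fun h1 => ?_, fun h2 => ?_⟩, h⟩
          · subst h1; rw [hv₁] at h; cases h
          · subst h2; rw [hv₂] at h; cases h
      rw [hset, ← hC]
  -- counting
  set X := Finset.univ.filter (fun g : Equiv.Perm α => ∀ i, f i ≠ some (g i)) with hX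
  set Y := Finset.univ.filter (fun g : Equiv.Perm α => ∀ i, f₁' i ≠ some (g i)) with hY
  have hmemX : ∀ g : Equiv.Perm α, g ∈ X ↔ ∀ i, f i ≠ some (g i) := by
    intro g; rw [hX]; simp
  have hmemY : ∀ g : Equiv.Perm α, g ∈ Y ↔ ∀ i, f₁' i ≠ some (g i) := by
    intro g; rw [hY]; simp
  have step1 : X.filter (fun g => ¬ g i₂ = v₁) = Y.filter (fun g => ¬ g i₂ = v₂) := by
    ext g
    simp only [Finset.mem_filter, hmemX, hmemY]
    constructor
    · rintro ⟨hg, hgv⟩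
      refine ⟨fun i => ?_, fun h => hg i₂ (by rw [hv₂, h])⟩
      by_cases h2 : i = i₂
      · subst h2
        rw [ha2]
        intro h
        exact hgv (Option.some_inj.mp h).symm
      · rw [hrest i h2]; exact hg i
    · rintro ⟨hg, hgv⟩
      refine ⟨fun i => ?_, fun h => hg i₂ (by rw [ha2, h])⟩
      by_cases h2 : i = i₂
      · subst h2
        rw [hv₂]
        intro h
        exact hgv (Option.some_inj.mp h).symm
      · rw [← hrest i h2]; exact hg i
  have split_X := Finset.card_filter_add_card_filter_not (s := X)
    (p := fun g => g i₂ = v₁)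
  have split_Y := Finset.card_filter_add_card_filter_not (s := Y)
    (p := fun g => g i₂ = v₂)
  have split_XY := Finset.card_filter_add_card_filter_not
    (s := X.filter (fun g => g i₂ = v₁)) (p := fun g => g i₁ = v₂)
  have hQY : ((X.filter (fun g => g i₂ = v₁)).filter (fun g => ¬ g i₁ = v₂)).card
      = (Y.filter (fun g => g i₂ = v₂)).card := by
    refine Finset.card_bij' (fun g _ => g.trans (Equiv.swap v₁ v₂))
      (fun g _ => g.trans (Equiv.swap v₁ v₂)) ?_ ?_ ?_ ?_
    · intro g hg
      simp only [Finset.mem_filter, hmemX] at hg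
      obtain ⟨⟨hg0, hg2⟩, hg1⟩ := hg
      simp only [Finset.mem_filter, hmemY, Equiv.trans_apply]
      have hswap2 : Equiv.swap v₁ v₂ (g i₂) = v₂ := by rw [hg2, Equiv.swap_apply_left]
      refine ⟨fun i => ?_, hswap2⟩
      by_cases h2 : i = i₂
      · subst h2
        rw [ha2, hswap2]
        intro h
        exact hvne (Option.some_inj.mp h)
      rw [hrest i h2]
      have hgi1 : g i ≠ v₁ := by
        rw [← hg2]
        intro h
        exact h2 (g.injective h)
      by_cases h1 : i = i₁
      · subst h1
        rw [hv₁]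
        rw [Equiv.swap_apply_of_ne_of_ne hgi1 hg1]
        intro h
        exact hgi1 (Option.some_inj.mp h).symm
      · cases hfi : f i with
        | none => simp
        | some w =>
          have hw1 : w ≠ v₁ := fun h => h1 (hfib1 i (by rw [hfi, h]))
          have hw2 : w ≠ v₂ := fun h => h2 (hfib2 i (by rw [hfi, h]))
          intro h
          replace h := (Option.some_inj.mp h)
          by_cases hgv2 : g i = v₂
          · rw [hgv2, Equiv.swap_apply_right] at h
            exact hw1 h
          · rw [Equiv.swap_apply_of_ne_of_ne hgi1 hgv2] at h
            exact hg0 i (by rw [hfi, h])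
    · intro g hg
      simp only [Finset.mem_filter, hmemY] at hg
      obtain ⟨hg0, hg2⟩ := hg
      simp only [Finset.mem_filter, hmemX, Equiv.trans_apply]
      have hswap2 : Equiv.swap v₁ v₂ (g i₂) = v₁ := by rw [hg2, Equiv.swap_apply_right]
      have hgi11 : g i₁ ≠ v₁ := by
        intro h
        exact hg0 i₁ (by rw [ha1, h])
      have hgi12 : g i₁ ≠ v₂ := by
        rw [← hg2]
        intro h
        exact hne (g.injective h)
      have hswap1 : Equiv.swap v₁ v₂ (g i₁) = g i₁ :=
        Equiv.swap_apply_of_ne_of_ne hgi11 hgi12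
      refine ⟨⟨fun i => ?_, hswap2⟩, by rw [hswap1]; exact hgi12⟩
      by_cases h2 : i = i₂
      · subst h2
        rw [hv₂, hswap2]
        intro h
        exact hvne (Option.some_inj.mp h).symm
      by_cases h1 : i = i₁
      · subst h1
        rw [hv₁, hswap1]
        intro h
        exact hgi11 (Option.some_inj.mp h).symm
      · cases hfi : f i with
        | none => simp
        | some w =>
          have hw1 : w ≠ v₁ := fun h => h1 (hfib1 i (by rw [hfi, h]))
          have hw2 : w ≠ v₂ := fun h => h2 (hfib2 i (by rw [hfi, h]))
          intro h
          replace h := (Option.some_inj.mp h)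
          have hgiv2 : g i ≠ v₂ := by
            rw [← hg2]
            intro h'
            exact h2 (g.injective h')
          by_cases hgv1 : g i = v₁
          · rw [hgv1, Equiv.swap_apply_left] at h
            exact hw2 h
          · rw [Equiv.swap_apply_of_ne_of_ne hgv1 hgiv2] at h
            apply hg0 i
            rw [hrest i h2, hfi, h]
    · intro g _
      ext x
      simp [Equiv.swap_apply_self]
    · intro g _
      ext x
      simp [Equiv.swap_apply_self]
  -- the P ≃ AvoidC f₂' bijection
  have hgs : ∀ g : Equiv.Perm α, g i₁ = v₂ → g i₂ = v₁ →
      ∀ x : α, (¬x = i₁ ∧ ¬x = i₂) ↔ (¬g x = v₂ ∧ ¬g x = v₁) := by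
    intro g h1 h2 x
    rw [← h1, ← h2]
    simp [EmbeddingLike.apply_eq_iff_eq]
  set e₂ : {x : α // ¬(¬x = i₁ ∧ ¬x = i₂)} ≃ {y : α // ¬(¬y = v₂ ∧ ¬y = v₁)} :=
    { toFun := fun x => if x.1 = i₁ then ⟨v₂, fun h => h.1 rfl⟩ else ⟨v₁, fun h => h.2 rfl⟩
      invFun := fun y => if y.1 = v₂ then ⟨i₁, fun h => h.1 rfl⟩ else ⟨i₂, fun h => h.2 rfl⟩
      left_inv := by
        rintro ⟨x, hx⟩
        have hx' : x = i₁ ∨ x = i₂ := by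
          by_contra h
          push_neg at h
          exact hx ⟨h.1, h.2⟩
        rcases hx' with rfl | rfl <;>
          simp [Subtype.ext_iff, Ne.symm hne, hvne]
      right_inv := by
        rintro ⟨y, hy⟩
        have hy' : y = v₂ ∨ y = v₁ := by
          by_contra h
          push_neg at h
          exact hy ⟨h.1, h.2⟩
        rcases hy' with rfl | rfl <;>
          simp [Subtype.ext_iff, Ne.symm hne, hvne] } with he₂
  set Bfun : Equiv.Perm {x : α // ¬x = i₁ ∧ ¬x = i₂} → Equiv.Perm α :=
    fun g₀ => (Equiv.sumCompl (fun x : α => ¬x = i₁ ∧ ¬x = i₂)).symm.trans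
      ((Equiv.sumCongr (g₀.trans u.symm) e₂).trans
        (Equiv.sumCompl (fun y : α => ¬y = v₂ ∧ ¬y = v₁))) with hBfun
  have hBfun_p : ∀ (g₀ : Equiv.Perm {x : α // ¬x = i₁ ∧ ¬x = i₂}) (x : α)
      (hx : ¬x = i₁ ∧ ¬x = i₂), Bfun g₀ x = (u.symm (g₀ ⟨x, hx⟩)).1 := by
    intro g₀ x hx
    rw [hBfun]
    simp only [Equiv.trans_apply]
    rw [my_sumCompl_symm_pos x hx]
    simp
  have hBfun_i1 : ∀ g₀, Bfun g₀ i₁ = v₂ := by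
    intro g₀
    rw [hBfun]
    simp only [Equiv.trans_apply]
    rw [my_sumCompl_symm_neg i₁ (fun h => h.1 rfl)]
    simp [he₂]
  have hBfun_i2 : ∀ g₀, Bfun g₀ i₂ = v₁ := by
    intro g₀
    rw [hBfun]
    simp only [Equiv.trans_apply]
    rw [my_sumCompl_symm_neg i₂ (fun h => h.2 rfl)]
    simp [he₂, Ne.symm hne]
  have hPcard : ((X.filter (fun g => g i₂ = v₁)).filter (fun g => g i₁ = v₂)).card
      = AvoidC f₂' := by
    have hAv : AvoidC f₂' = (Finset.univ.filter
        (fun g : Equiv.Perm {x : α // ¬x = i₁ ∧ ¬x = i₂} =>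
          ∀ i, f₂' i ≠ some (g i))).card := rfl
    rw [hAv]
    refine Finset.card_bij'
      (fun g hg => (Equiv.subtypeEquiv g (hgs g (Finset.mem_filter.mp hg).2
        (Finset.mem_filter.mp (Finset.mem_filter.mp hg).1).2)).trans u)
      (fun g₀ _ => Bfun g₀) ?_ ?_ ?_ ?_
    · intro g hg
      have hgX := (Finset.mem_filter.mp (Finset.mem_filter.mp hg).1).1
      rw [hmemX] at hgX
      simp only [Finset.mem_filter, Finset.mem_univ, true_and]
      intro x heq
      by_cases hfx0 : f x.1 = none
      · rw [hf2none x hfx0] at heq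
        cases heq
      · obtain ⟨w, hfx⟩ := Option.ne_none_iff_exists'.mp hfx0
        rw [hf2some x w hfx (hq x.1 x.2 w hfx)] at heq
        simp only [Equiv.trans_apply, Equiv.subtypeEquiv_apply] at heq
        replace heq := congrArg Subtype.val (u.injective (Option.some_inj.mp heq))
        exact hgX x.1 (by rw [hfx]; exact congrArg some heq)
    · intro g₀ hg₀
      simp only [Finset.mem_filter, Finset.mem_univ, true_and] at hg₀
      refine Finset.mem_filter.mpr ⟨Finset.mem_filter.mpr ⟨?_, hBfun_i2 g₀⟩, hBfun_i1 g₀⟩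
      rw [hmemX]
      intro i heq
      by_cases h1 : i = i₁
      · subst h1
        rw [hv₁, hBfun_i1 g₀] at heq
        exact hvne (Option.some_inj.mp heq)
      by_cases h2 : i = i₂
      · subst h2
        rw [hv₂, hBfun_i2 g₀] at heq
        exact hvne (Option.some_inj.mp heq).symm
      · have hx : ¬i = i₁ ∧ ¬i = i₂ := ⟨h1, h2⟩
        rw [hBfun_p g₀ i hx] at heq
        apply hg₀ ⟨i, hx⟩
        rw [hf2some ⟨i, hx⟩ _ heq (u.symm (g₀ ⟨i, hx⟩)).2]
        congr 1
        exact u.apply_symm_apply _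
    · intro g hg
      have h1 : g i₁ = v₂ := (Finset.mem_filter.mp hg).2
      have h2 : g i₂ = v₁ := (Finset.mem_filter.mp (Finset.mem_filter.mp hg).1).2
      ext x
      by_cases hx1 : x = i₁
      · subst hx1
        rw [hBfun_i1, h1]
      by_cases hx2 : x = i₂
      · subst hx2
        rw [hBfun_i2, h2]
      · have hx : ¬x = i₁ ∧ ¬x = i₂ := ⟨hx1, hx2⟩
        rw [hBfun_p _ x hx]
        simp only [Equiv.trans_apply, Equiv.symm_apply_apply, Equiv.subtypeEquiv_apply]
    · intro g₀ hg₀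
      refine Equiv.ext fun x => ?_
      rw [Equiv.trans_apply, Equiv.apply_eq_iff_eq_symm_apply]
      refine Subtype.ext ?_
      rw [Equiv.subtypeEquiv_apply]
      exact hBfun_p g₀ x.1 x.2
  refine ⟨f₁', {x : α // ¬x = i₁ ∧ ¬x = i₂}, inferInstance, inferInstance, f₂',
    hPMs1, hPMs2, ?_⟩
  have hXA : AvoidC f = X.card := rfl
  have hYA : AvoidC f₁' = Y.card := rfl
  rw [hXA, hYA, ← hPcard]
  have c1 := congrArg Finset.card step1
  omega

lemma twoMax_pms {n : ℕ} (f : Fin n → Option (Fin n)) {A B C : ℕ}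
    (h : TwoMaxParams f A B C) : PMs f A B C := by
  unfold TwoMaxParams at h; unfold PMs; convert h <;> simp

lemma avoidCount_eq {n : ℕ} (f : Fin n → Option (Fin n)) : avoidCount f = AvoidC f := by
  unfold avoidCount AvoidC; apply congrArg; ext g; simp

theorem stmt_7 (A B C : ℕ) (hB : 2 ≤ B)
    (f : Fin (A + B + C) → Option (Fin (A + B + C)))
    (f₁ : Fin (A + B + C) → Option (Fin (A + B + C)))
    (f₂ : Fin (A + (B - 2) + C) → Option (Fin (A + (B - 2) + C)))
    (hf : TwoMaxParams f A B C)
    (hf₁ : TwoMaxParams f₁ (A + 2) (B - 2) C)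
    (hf₂ : TwoMaxParams f₂ A (B - 2) C) :
    avoidCount f = avoidCount f₁ + avoidCount f₂ := by
  obtain ⟨f₁', T, _, _, f₂', h₁, h₂, hrec⟩ := core_rec f hB (twoMax_pms f hf)
  rw [avoidCount_eq, avoidCount_eq, avoidCount_eq, hrec,
    avoid_eq_of_pms f₁' f₁ h₁ (twoMax_pms f₁ hf₁),
    avoid_eq_of_pms f₂' f₂ h₂ (twoMax_pms f₂ hf₂)]
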